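/- arXiv:1512.03005 — 2 statements merged into one kernel-verified Lean document; each statement's English description precedes it below -/
import Mathlib

section
/- Let G be a weak framework for a matroid M and let H be a theta-subgraph of G. If two of the three cycles of H are balanced, then so is the third. -/
open Set Matroid
open scoped Classical

namespace QuasiGraphicPaper

universe u v

/-- A finite multigraph: a set `V` of vertices (in an ambient type `α`), a set `E` of
edges (in an ambient type `β`), and an incidence function assigning to each edge an
unordered pair of endpoints; loop-edges and parallel edges are allowed. -/
structure Graph (α : Type u) (β : Type v) where
  V : Set α
  E : Set β
  ends : β → Sym2 α
  finV : V.Finite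
  finE : E.Finite
  ends_mem : ∀ ⦃e⦄, e ∈ E → ∀ ⦃x⦄, x ∈ ends e → x ∈ V

namespace Graph

variable {α : Type u} {β : Type v}

/-- `e` is a loop-edge of `G` at the vertex `v`. -/
def IsLoopAt (G : Graph α β) (e : β) (v : α) : Prop :=
  e ∈ G.E ∧ G.ends e = Sym2.diag v

/-- `loops_G(v)`: the set of loop-edges of `G` at `v`. -/
def loopsAt (G : Graph α β) (v : α) : Set β := {e | G.IsLoopAt e v}

/-- Two vertices are adjacent if some edge of `G` has them as its two endpoints. -/
def Adj (G : Graph α β) (u v : α) : Prop := ∃ e ∈ G.E, G.ends e = s(u, v)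

/-- A graph is connected if any two of its vertices are joined by a walk.
(The graph with no vertices is connected.) -/
def Connected (G : Graph α β) : Prop :=
  ∀ u ∈ G.V, ∀ v ∈ G.V, Relation.ReflTransGen G.Adj u v

/-- Delete a set `X` of vertices: remove the vertices in `X` and all edges meeting `X`. -/
def deleteVertices (G : Graph α β) (X : Set α) : Graph α β where
  V := G.V \ X
  E := {e ∈ G.E | ∀ x ∈ G.ends e, x ∉ X}
  ends := G.ends
  finV := G.finV.sdiff
  finE := G.finE.subset (sep_subset _ _)
  ends_mem := fun e he x hx => ⟨G.ends_mem he.1 hx, he.2 x hx⟩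

/-- `G − v`: delete the single vertex `v`. -/
abbrev deleteVertex (G : Graph α β) (v : α) : Graph α β := G.deleteVertices {v}

/-- `G − e`: delete the edge `e` (keeping all vertices). -/
def deleteEdge (G : Graph α β) (e : β) : Graph α β where
  V := G.V
  E := G.E \ {e}
  ends := G.ends
  finV := G.finV
  finE := G.finE.sdiff
  ends_mem := fun f hf x hx => G.ends_mem hf.1 hx

/-- `G[X]`: the subgraph of `G` with edge set `X` (intersected with `E(G)`) and
no isolated vertices. -/
def restrictEdges (G : Graph α β) (X : Set β) : Graph α β where
  V := {v | ∃ e ∈ X ∩ G.E, v ∈ G.ends e}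
  E := X ∩ G.E
  ends := G.ends
  finV := G.finV.subset (by rintro v ⟨e, ⟨-, he⟩, hv⟩; exact G.ends_mem he hv)
  finE := G.finE.subset inter_subset_right
  ends_mem := fun e he x hx => ⟨e, he, hx⟩

/-- The connected component of `G` containing the vertex `v`, as a graph. -/
def componentOf (G : Graph α β) (v : α) : Graph α β where
  V := {u ∈ G.V | Relation.ReflTransGen G.Adj v u}
  E := {e ∈ G.E | ∀ x ∈ G.ends e, Relation.ReflTransGen G.Adj v x}
  ends := G.ends
  finV := G.finV.subset (sep_subset _ _)
  finE := G.finE.subset (sep_subset _ _)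
  ends_mem := fun e he x hx => ⟨G.ends_mem he.1 hx, he.2 x hx⟩

/-- `H` is a connected component of `G`. -/
def IsComponentOf (H G : Graph α β) : Prop := ∃ v ∈ G.V, H = G.componentOf v

/-- The number of connected components of `G`. -/
noncomputable def ncomponents (G : Graph α β) : ℕ :=
  {H : Graph α β | H.IsComponentOf G}.ncard

/-- `G` has at most two connected components: among any three vertices, two are joined. -/
def AtMostTwoComponents (G : Graph α β) : Prop :=
  ∀ u ∈ G.V, ∀ v ∈ G.V, ∀ w ∈ G.V,
    Relation.ReflTransGen G.Adj u v ∨ Relation.ReflTransGen G.Adj u w ∨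
      Relation.ReflTransGen G.Adj v w

/-- The degree of a vertex: loop-edges count twice. -/
noncomputable def degree (G : Graph α β) (v : α) : ℕ :=
  ({e ∈ G.E | v ∈ G.ends e ∧ ¬ (G.ends e).IsDiag}).ncard +
    2 * ({e ∈ G.E | G.ends e = Sym2.diag v}).ncard

/-- `G` is a cycle: it is connected, has at least one edge, and every vertex has
degree two. -/
def IsCycleGraph (G : Graph α β) : Prop :=
  G.E.Nonempty ∧ G.Connected ∧ ∀ v ∈ G.V, G.degree v = 2

/-- `C` is (the edge set of) a cycle of `G`. -/
def CycleSet (G : Graph α β) (C : Set β) : Prop :=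
  C ⊆ G.E ∧ (G.restrictEdges C).IsCycleGraph

/-- A forest: a graph with no cycles (in particular no loop-edges). -/
def IsForest (G : Graph α β) : Prop := ∀ C, ¬ G.CycleSet C

/-- `H` is a subgraph of `G`. -/
def IsSubgraph (H G : Graph α β) : Prop := H.V ⊆ G.V ∧ H.E ⊆ G.E ∧ H.ends = G.ends

/-- `G` is `k`-connected if `G − X` is connected for every vertex set `X` with `|X| < k`. -/
def KConnected (G : Graph α β) (k : ℕ) : Prop :=
  ∀ X : Set α, X.encard < k → (G.deleteVertices X).Connected

/-- A theta: a `2`-connected graph with exactly two vertices of degree three, all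
other vertices having degree two. -/
def IsTheta (H : Graph α β) : Prop :=
  H.KConnected 2 ∧
    ∃ a ∈ H.V, ∃ b ∈ H.V, a ≠ b ∧ H.degree a = 3 ∧ H.degree b = 3 ∧
      ∀ v ∈ H.V, v ≠ a → v ≠ b → H.degree v = 2

/-- `G / e`: contract the non-loop edge `e` with endpoints `x` and `y`
(identifying `y` with `x` and deleting `e`). -/
noncomputable def contractEdge (G : Graph α β) (e : β) (x y : α) (he : e ∈ G.E)
    (hxy : G.ends e = s(x, y)) (hne : x ≠ y) : Graph α β where
  V := G.V \ {y}
  E := G.E \ {e}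
  ends := fun f => (G.ends f).map (fun w => if w = y then x else w)
  finV := G.finV.sdiff
  finE := G.finE.sdiff
  ends_mem := by
    rintro f ⟨hf, -⟩ z hz
    rw [Sym2.mem_map] at hz
    obtain ⟨w, hw, rfl⟩ := hz
    by_cases hwy : w = y
    · rw [if_pos hwy]
      have hx : x ∈ G.ends e := by rw [hxy]; exact Sym2.mem_mk_left x y
      exact ⟨G.ends_mem he hx, by simp [hne]⟩
    · rw [if_neg hwy]
      exact ⟨G.ends_mem hf hw, by simp [hwy]⟩

/-- `G ∘ e`: for a loop-edge `e` at a vertex `v` which is the unique loop-edge at `v`,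
delete `v` and `e`, and replace every other edge `f = vw` at `v` by a loop-edge at `w`. -/
noncomputable def circ (G : Graph α β) (e : β) (v : α)
    (hno : ∀ f ∈ G.E, G.ends f = Sym2.diag v → f = e) : Graph α β where
  V := G.V \ {v}
  E := G.E \ {e}
  ends := fun f =>
    if h : f ∈ G.E ∧ f ≠ e ∧ v ∈ G.ends f then Sym2.diag (Sym2.Mem.other h.2.2)
    else G.ends f
  finV := G.finV.sdiff
  finE := G.finE.sdiff
  ends_mem := by
    rintro f ⟨hf, hfe⟩ z hz
    have hfe' : f ≠ e := fun h' => hfe (by simp [h'])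
    by_cases h : f ∈ G.E ∧ f ≠ e ∧ v ∈ G.ends f
    · rw [dif_pos h] at hz
      have hze : z = Sym2.Mem.other h.2.2 := by
        have h2 : z ∈ s(Sym2.Mem.other h.2.2, Sym2.Mem.other h.2.2) := hz
        rw [Sym2.mem_iff] at h2
        tauto
      subst hze
      refine ⟨G.ends_mem hf (Sym2.other_mem h.2.2), ?_⟩
      simp only [mem_singleton_iff]
      intro hzv
      apply h.2.1
      apply hno f hf
      show G.ends f = s(v, v)
      rw [← Sym2.other_spec h.2.2, hzv]
    · rw [dif_neg h] at hz
      refine ⟨G.ends_mem hf hz, ?_⟩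
      simp only [mem_singleton_iff]
      intro hzv
      subst hzv
      exact h ⟨hf, hfe', hz⟩

end Graph

/-! ### Matroid notions -/

variable {α : Type u} {β : Type v}

/-- The rank `r_M(X)` of a set `X` in a matroid `M`: the maximum size of an
independent subset of `X`. -/
noncomputable def rank (M : Matroid β) (X : Set β) : ℕ :=
  (⨆ I ∈ {I : Set β | M.Indep I ∧ I ⊆ X}, I.encard).toNat

/-- `C` is a circuit of `M` : a minimal dependent set. -/
def IsCircuit (M : Matroid β) (C : Set β) : Prop :=
  M.Dep C ∧ ∀ D, D ⊂ C → M.Indep D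

/-- `M \ D` : delete the set `D` from the matroid `M`. -/
def deleteM (M : Matroid β) (D : Set β) : Matroid β := M ↾ (M.E \ D)

/-- `M / C` : contract the set `C` in the matroid `M`. -/
def contractM (M : Matroid β) (C : Set β) : Matroid β := (M✶ ↾ (M✶.E \ C))✶

/-- `G` is a weak framework for `M`: conditions (1)–(3). -/
def WeakFramework (G : Graph α β) (M : Matroid β) : Prop :=
  G.E = M.E ∧
  (∀ H : Graph α β, H.IsComponentOf G → rank M H.E ≤ H.V.ncard) ∧
  (∀ v ∈ G.V,
    M.closure (G.deleteVertex v).E ⊆ (G.deleteVertex v).E ∪ G.loopsAt v)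

/-- `G` is a framework for `M`: conditions (1)–(4). -/
def Framework (G : Graph α β) (M : Matroid β) : Prop :=
  WeakFramework G M ∧
    ∀ C, IsCircuit M C → (G.restrictEdges C).AtMostTwoComponents

/-- `M` is the cycle matroid `M(G)` of `G` : the ground set of `M` is `E(G)`, and the
circuits of `M` are exactly the edge sets of cycles of `G`. -/
def IsCycleMatroidOf (G : Graph α β) (M : Matroid β) : Prop :=
  M.E = G.E ∧ ∀ C, IsCircuit M C ↔ G.CycleSet C

/-- A matroid is graphic if it is the cycle matroid of some graph. -/
def Graphic (M : Matroid β) : Prop :=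
  ∃ (γ : Type v) (G : Graph γ β), IsCycleMatroidOf G M

/-- A matroid is quasi-graphic if it has a framework. -/
def QuasiGraphic (M : Matroid β) : Prop :=
  ∃ (γ : Type v) (G : Graph γ β), Framework G M

/-- `M` is a lift of `N` if some single-element extension `M'` of `M` satisfies
`M' \ e = M` and `M' / e = N`. -/
def IsLiftOf (M N : Matroid β) : Prop :=
  ∃ M' : Matroid (Option β), (none : Option β) ∈ M'.E ∧
    deleteM M' {none} = M.map some (Option.some_injective β).injOn ∧
    contractM M' {none} = N.map some (Option.some_injective β).injOn

/-- `M` is a lifted-graphic matroid: for some single-element extension `M'` of `M`,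
`M' / e` is graphic. -/
def LiftedGraphic (M : Matroid β) : Prop :=
  ∃ M' : Matroid (Option β), (none : Option β) ∈ M'.E ∧
    deleteM M' {none} = M.map some (Option.some_injective β).injOn ∧
    Graphic (contractM M' {none})

/-- `(M, V)` is a framed matroid: `V` is a basis of `M` and every element of `M` is
spanned by a subset of `V` with at most two elements. -/
def FramedMatroid {γ : Type u} (M : Matroid γ) (V : Set γ) : Prop :=
  M.IsBase V ∧ ∀ e ∈ M.E, ∃ S ⊆ V, S.ncard ≤ 2 ∧ e ∈ M.closure S

/-- `M` is a frame matroid: `M = M' \ V` for some framed matroid `(M', V)`. -/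
def FrameMatroid (M : Matroid β) : Prop :=
  ∃ (γ : Type v) (M' : Matroid (β ⊕ γ)) (V : Set (β ⊕ γ)),
    FramedMatroid M' V ∧
      deleteM M' V = M.map Sum.inl Sum.inl_injective.injOn

/-- `M` is `3`-connected: it has no `k`-separation for `k ≤ 2`. -/
def ThreeConnected (M : Matroid β) : Prop :=
  ∀ X ⊆ M.E, ∀ k : ℕ, k ≤ 2 → (k : ℕ∞) ≤ X.encard → (k : ℕ∞) ≤ (M.E \ X).encard →
    rank M M.E + k ≤ rank M X + rank M (M.E \ X)

/-- `M` is representable over some field. -/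
def Representable (M : Matroid β) : Prop :=
  ∃ (F : Type v) (_ : Field F) (W : Type v) (_ : AddCommGroup W) (_ : Module F W)
    (φ : β → W), ∀ I ⊆ M.E, (M.Indep I ↔ LinearIndependent F (fun x : I => φ x))

/-- A collection `B` of cycles of `G` satisfies the theta-property if there is no
theta-subgraph of `G` with exactly two of its three cycles in `B`. -/
def ThetaProperty (G : Graph α β) (B : Set (Set β)) : Prop :=
  ∀ H : Graph α β, H.IsSubgraph G → H.IsTheta →
    ∀ C1 C2 C3, H.CycleSet C1 → H.CycleSet C2 → H.CycleSet C3 →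
      C1 ≠ C2 → C2 ≠ C3 → C1 ≠ C3 → C1 ∈ B → C2 ∈ B → C3 ∈ B

/-! ### Auxiliary lemmas for Statement 12 -/

section Aux12

variable {α : Type u} {β : Type v}

lemma sym2_cases (s : Sym2 α) : ∃ x y, s = s(x, y) := by
  obtain ⟨⟨x, y⟩, rfl⟩ := Quot.exists_rep s
  exact ⟨x, y, rfl⟩

lemma circuit_mem_closure {M : Matroid β} {C : Set β} (hC : IsCircuit M C) {x : β}
    (hx : x ∈ C) : x ∈ M.closure (C \ {x}) := by
  have hind : M.Indep (C \ {x}) := hC.2 _ (Set.sdiff_singleton_ssubset.mpr hx)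
  rw [hind.mem_closure_iff]
  left
  have hins : insert x (C \ {x}) = C := by
    rw [Set.insert_diff_singleton, Set.insert_eq_self.mpr hx]
  rw [hins]
  exact hC.1

lemma exists_circuit_subset {M : Matroid β} :
    ∀ (n : ℕ) (X : Set β), X.Finite → X.ncard ≤ n → M.Dep X →
      ∃ D, D ⊆ X ∧ IsCircuit M D := by
  intro n
  induction n with
  | zero =>
    intro X hfin hcard hdep
    rw [Nat.le_zero, Set.ncard_eq_zero hfin] at hcard
    subst hcard
    exact absurd M.empty_indep hdep.not_indep
  | succ n ih =>
    intro X hfin hcard hdep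
    by_cases hmin : ∀ D, D ⊂ X → ¬ M.Dep D
    · refine ⟨X, subset_rfl, hdep, fun D hD => ?_⟩
      have hDE : D ⊆ M.E := hD.subset.trans hdep.subset_ground
      exact (Matroid.not_dep_iff hDE).mp (hmin D hD)
    · push_neg at hmin
      obtain ⟨D, hDX, hDdep⟩ := hmin
      have hlt := Set.ncard_lt_ncard hDX hfin
      obtain ⟨D', hD'1, hD'2⟩ := ih D (hfin.subset hDX.subset) (by omega) hDdep
      exact ⟨D', hD'1.trans hDX.subset, hD'2⟩

lemma dep_of_two_circuits {M : Matroid β} {C1 C2 : Set β} (b1 : IsCircuit M C1)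
    (b2 : IsCircuit M C2) {x e : β} (hx1 : x ∈ C1) (hx2 : x ∈ C2) (he2 : e ∈ C2)
    (he1 : e ∉ C1) : M.Dep ((C1 ∪ C2) \ {x}) := by
  have hex : e ≠ x := fun hh => he1 (hh ▸ hx1)
  have hUE : C1 ∪ C2 ⊆ M.E := Set.union_subset b1.1.subset_ground b2.1.subset_ground
  set S : Set β := (C1 ∪ C2) \ {x, e} with hS
  have hSE : S ⊆ M.E := fun f hf => hUE hf.1
  have hxS : x ∈ M.closure S := by
    refine M.closure_subset_closure ?_ (circuit_mem_closure b1 hx1)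
    rintro f ⟨hf, hfx⟩
    refine ⟨Or.inl hf, ?_⟩
    rintro (rfl | rfl)
    · exact hfx rfl
    · exact he1 hf
  have hC2sub : C2 \ {e} ⊆ M.closure S := by
    rintro f ⟨hf, hfe⟩
    by_cases hfx : f = x
    · exact hfx ▸ hxS
    · refine M.subset_closure S hSE ⟨Or.inr hf, ?_⟩
      rintro (rfl | rfl)
      · exact hfx rfl
      · exact hfe rfl
  have heS : e ∈ M.closure S :=
    M.closure_subset_closure_of_subset_closure hC2sub (circuit_mem_closure b2 he2)
  rw [Matroid.dep_iff]
  refine ⟨fun hind => ?_, (Set.diff_subset).trans hUE⟩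
  have heT : e ∈ (C1 ∪ C2) \ {x} := ⟨Or.inr he2, by simpa using hex⟩
  refine hind.notMem_closure_sdiff_of_mem heT ?_
  have hTS : ((C1 ∪ C2) \ {x}) \ {e} = S := by
    rw [hS, Set.diff_diff, Set.singleton_union]
  rw [hTS]
  exact heS

/-- The set of edges of `K` incident with `v`. -/
def inc (K : Graph α β) (v : α) : Set β := {e | e ∈ K.E ∧ v ∈ K.ends e}

lemma inc_finite (K : Graph α β) (v : α) : (inc K v).Finite :=
  K.finE.subset fun _ he => he.1

lemma degree_eq_ncard_inc {K : Graph α β} (hnl : ∀ e ∈ K.E, ¬ (K.ends e).IsDiag) (v : α) :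
    K.degree v = (inc K v).ncard := by
  have h1 : {e | e ∈ K.E ∧ v ∈ K.ends e ∧ ¬ (K.ends e).IsDiag} = inc K v := by
    ext e
    exact ⟨fun hh => ⟨hh.1, hh.2.1⟩, fun hh => ⟨hh.1, hh.2, hnl e hh.1⟩⟩
  have h2 : {e | e ∈ K.E ∧ K.ends e = Sym2.diag v} = (∅ : Set β) := by
    ext e
    simp only [Set.mem_setOf_eq, Set.mem_empty_iff_false, iff_false, not_and]
    intro he hd
    exact hnl e he (hd ▸ Sym2.diag_isDiag v)
  show ({e | e ∈ K.E ∧ v ∈ K.ends e ∧ ¬ (K.ends e).IsDiag}).ncard +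
      2 * ({e | e ∈ K.E ∧ K.ends e = Sym2.diag v}).ncard = (inc K v).ncard
  rw [h1, h2, Set.ncard_empty]
  omega

lemma reach_eq {K : Graph α β} {v : α}
    (hv : ∀ g ∈ K.E, v ∈ K.ends g → K.ends g = Sym2.diag v) :
    ∀ x, Relation.ReflTransGen K.Adj v x → x = v := by
  intro x hx
  induction hx with
  | refl => rfl
  | @tail w x hr hadj ih =>
    obtain ⟨g, hg, hge⟩ := hadj
    rw [ih] at hge
    have hvg : v ∈ K.ends g := by rw [hge]; exact Sym2.mem_mk_left _ _
    have hd := hv g hg hvg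
    rw [hge] at hd
    have : x ∈ Sym2.diag v := hd ▸ Sym2.mem_mk_right v x
    rcases Sym2.mem_iff.mp this with h | h <;> exact h

lemma walk_empty {H : Graph α β} {a b : α} (haV : a ∈ H.V) (hab : a ≠ b)
    (hconn : (H.deleteVertex b).Connected)
    (hnl : ∀ e ∈ H.E, ¬ (H.ends e).IsDiag)
    {S : Set β} (hSE : S ⊆ H.E)
    (hia : ∀ e ∈ S, a ∉ H.ends e)
    (hii : ∀ v, v ≠ a → v ≠ b → ∀ e ∈ S, v ∈ H.ends e → ∀ f ∈ H.E, v ∈ H.ends f → f ∈ S) :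
    S = ∅ := by
  by_contra hne
  obtain ⟨d, hd⟩ := Set.nonempty_iff_ne_empty.mpr hne
  obtain ⟨u, w, huw⟩ := sym2_cases (H.ends d)
  have hune : u ≠ w := fun hh =>
    hnl d (hSE hd) (by rw [huw, hh]; exact Sym2.mk_isDiag_iff.mpr rfl)
  have hv0 : ∃ v0, v0 ∈ H.ends d ∧ v0 ≠ b := by
    by_cases hu : u = b
    · exact ⟨w, by rw [huw]; exact Sym2.mem_mk_right _ _, fun hh => hune (by rw [hu, hh])⟩
    · exact ⟨u, by rw [huw]; exact Sym2.mem_mk_left _ _, hu⟩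
  obtain ⟨v0, hv0d, hv0b⟩ := hv0
  have hv0V : v0 ∈ H.V := H.ends_mem (hSE hd) hv0d
  have hkey : ∀ x, Relation.ReflTransGen (H.deleteVertex b).Adj v0 x →
      ∃ e ∈ S, x ∈ H.ends e := by
    intro x hx
    induction hx with
    | refl => exact ⟨d, hd, hv0d⟩
    | @tail w' x hr hadj ih =>
      obtain ⟨e, heS, hwe⟩ := ih
      obtain ⟨g, hgE, hge⟩ := hadj
      obtain ⟨hgE', hgavoid⟩ := hgE
      have hge' : H.ends g = s(w', x) := hge
      have hw'g : w' ∈ H.ends g := by rw [hge']; exact Sym2.mem_mk_left _ _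
      have hw'b : w' ≠ b := fun hh => hgavoid w' hw'g (by simp [hh])
      by_cases hw'a : w' = a
      · exact absurd (hw'a ▸ hwe) (hia e heS)
      · have hgS : g ∈ S := hii w' hw'a hw'b e heS hwe g hgE' hw'g
        exact ⟨g, hgS, by rw [hge']; exact Sym2.mem_mk_right _ _⟩
  have haVb : a ∈ (H.deleteVertex b).V := ⟨haV, by simp [hab]⟩
  have hv0Vb : v0 ∈ (H.deleteVertex b).V := ⟨hv0V, by simp [hv0b]⟩
  obtain ⟨e, heS, hae⟩ := hkey a (hconn v0 hv0Vb a haVb)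
  exact hia e heS hae

lemma cycle_inc_ncard {H : Graph α β} {C : Set β} (hC : H.CycleSet C)
    (hnl : ∀ e ∈ H.E, ¬ (H.ends e).IsDiag) {v : α} {e : β} (he : e ∈ C)
    (hv : v ∈ H.ends e) : {f | f ∈ C ∧ v ∈ H.ends f}.ncard = 2 := by
  set K := H.restrictEdges C with hK
  have hvK : v ∈ K.V := ⟨e, ⟨he, hC.1 he⟩, hv⟩
  have hdeg := hC.2.2.2 v hvK
  have hnlK : ∀ f ∈ K.E, ¬ (K.ends f).IsDiag := fun f hf => hnl f hf.2
  rw [degree_eq_ncard_inc hnlK v] at hdeg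
  have hinc : inc K v = {f | f ∈ C ∧ v ∈ H.ends f} := by
    ext f
    exact ⟨fun hh => ⟨hh.1.1, hh.2⟩, fun hh => ⟨⟨hh.1, hC.1 hh.1⟩, hh.2⟩⟩
  rw [hinc] at hdeg
  exact hdeg

lemma cycle_closed {H : Graph α β} {C : Set β} (hC : H.CycleSet C)
    (hnl : ∀ e ∈ H.E, ¬ (H.ends e).IsDiag) {v : α} (hv2 : (inc H v).ncard = 2)
    {e : β} (he : e ∈ C) (hv : v ∈ H.ends e) :
    ∀ f ∈ H.E, v ∈ H.ends f → f ∈ C := by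
  have h2 := cycle_inc_ncard hC hnl he hv
  have hsub : {f | f ∈ C ∧ v ∈ H.ends f} ⊆ inc H v := fun f hf => ⟨hC.1 hf.1, hf.2⟩
  have heq := Set.eq_of_subset_of_ncard_le hsub (by rw [h2, hv2]) (inc_finite H v)
  intro f hf hvf
  have : f ∈ {f | f ∈ C ∧ v ∈ H.ends f} := heq ▸ (⟨hf, hvf⟩ : f ∈ inc H v)
  exact this.1

lemma mem_of_pair {H : Graph α β} (hnl : ∀ e ∈ H.E, ¬ (H.ends e).IsDiag) {C : Set β}
    (hC : H.CycleSet C) {v : α} {g f f0 : β}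
    (hg : g ∈ C) (hvg : v ∈ H.ends g) (hf : f ∈ C) (hvf : v ∈ H.ends f) (hfg : f ≠ g)
    (hf0 : f0 ∈ C) (hvf0 : v ∈ H.ends f0) (hf0g : f0 ≠ g) : f0 = f := by
  have h2 := cycle_inc_ncard hC hnl hg hvg
  have hsub2 : ({g, f} : Set β) ⊆ {x | x ∈ C ∧ v ∈ H.ends x} := by
    rintro x (rfl | rfl)
    · exact ⟨hg, hvg⟩
    · exact ⟨hf, hvf⟩
  have hfin : {x | x ∈ C ∧ v ∈ H.ends x}.Finite :=
    (H.finE.subset hC.1).subset fun x hx => hx.1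
  have heq := Set.eq_of_subset_of_ncard_le hsub2
    (le_of_eq (by rw [h2, Set.ncard_pair (Ne.symm hfg)])) hfin
  have hmem : f0 ∈ ({g, f} : Set β) := by
    rw [heq]; exact ⟨hf0, hvf0⟩
  rcases hmem with h | h
  · exact absurd h hf0g
  · exact h

end Aux12
section Aux12b

variable {α : Type u} {β : Type v}

lemma circuit_good {G : Graph α β} {M : Matroid β} (h : WeakFramework G M)
    {D : Set β} (hD : IsCircuit M D) (hDE : D ⊆ G.E) {e : β} (he : e ∈ D) {v : α}
    (hv : v ∈ G.ends e) (hnd : ¬ (G.ends e).IsDiag) :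
    ∃ f ∈ D, f ≠ e ∧ v ∈ G.ends f := by
  by_contra hcon
  push_neg at hcon
  have hvV : v ∈ G.V := G.ends_mem (hDE he) hv
  have hsub : D \ {e} ⊆ (G.deleteVertex v).E := by
    rintro f ⟨hf, hfe⟩
    refine ⟨hDE hf, fun x hx hxv => ?_⟩
    rw [Set.mem_singleton_iff] at hxv
    subst hxv
    exact hcon f hf (by simpa using hfe) hx
  have hecl : e ∈ M.closure ((G.deleteVertex v).E) :=
    M.closure_subset_closure hsub (circuit_mem_closure hD he)
  rcases h.2.2 v hvV hecl with h' | h'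
  · exact h'.2 v hv rfl
  · exact hnd (h'.2 ▸ Sym2.diag_isDiag v)

lemma cycle_touches {H : Graph α β} {a b : α} (haV : a ∈ H.V) (hab : a ≠ b)
    (hconn : (H.deleteVertex b).Connected)
    (hnl : ∀ e ∈ H.E, ¬ (H.ends e).IsDiag)
    (hdeg2 : ∀ v ∈ H.V, v ≠ a → v ≠ b → (inc H v).ncard = 2)
    {C : Set β} (hC : H.CycleSet C) : ∃ f ∈ C, a ∈ H.ends f := by
  by_contra hcon
  push_neg at hcon
  have hempty : C = ∅ := by
    refine walk_empty haV hab hconn hnl hC.1 hcon ?_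
    intro v hva hvb e heC hve f hfE hvf
    have hvV : v ∈ H.V := H.ends_mem (hC.1 heC) hve
    exact cycle_closed hC hnl (hdeg2 v hvV hva hvb) heC hve f hfE hvf
  obtain ⟨f, hf⟩ := hC.2.1
  rw [hempty] at hf
  exact hf.1

lemma cycle_eq_of_inc_eq {H : Graph α β} {a b : α} (haV : a ∈ H.V) (hab : a ≠ b)
    (hconn : (H.deleteVertex b).Connected)
    (hnl : ∀ e ∈ H.E, ¬ (H.ends e).IsDiag)
    (hdeg2 : ∀ v ∈ H.V, v ≠ a → v ≠ b → (inc H v).ncard = 2)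
    {C C' : Set β} (hC : H.CycleSet C) (hC' : H.CycleSet C')
    (hpa : {f | f ∈ C ∧ a ∈ H.ends f} = {f | f ∈ C' ∧ a ∈ H.ends f}) : C = C' := by
  have hSE : (C \ C') ∪ (C' \ C) ⊆ H.E := by
    rintro f (hf | hf)
    · exact hC.1 hf.1
    · exact hC'.1 hf.1
  have hempty : (C \ C') ∪ (C' \ C) = ∅ := by
    refine walk_empty haV hab hconn hnl hSE ?_ ?_
    · rintro e (he | he) hae
      · exact he.2 ((Set.ext_iff.mp hpa e).mp ⟨he.1, hae⟩).1
      · exact he.2 ((Set.ext_iff.mp hpa e).mpr ⟨he.1, hae⟩).1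
    · rintro v hva hvb e (he | he) hve f hfE hvf
      · have hvV : v ∈ H.V := H.ends_mem (hC.1 he.1) hve
        have hfC : f ∈ C := cycle_closed hC hnl (hdeg2 v hvV hva hvb) he.1 hve f hfE hvf
        have hfC' : f ∉ C' := fun hmem =>
          he.2 (cycle_closed hC' hnl (hdeg2 v hvV hva hvb) hmem hvf e (hC.1 he.1) hve)
        exact Or.inl ⟨hfC, hfC'⟩
      · have hvV : v ∈ H.V := H.ends_mem (hC'.1 he.1) hve
        have hfC' : f ∈ C' := cycle_closed hC' hnl (hdeg2 v hvV hva hvb) he.1 hve f hfE hvf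
        have hfC : f ∉ C := fun hmem =>
          he.2 (cycle_closed hC hnl (hdeg2 v hvV hva hvb) hmem hvf e (hC'.1 he.1) hve)
        exact Or.inr ⟨hfC', hfC⟩
  rw [Set.union_empty_iff] at hempty
  exact Set.Subset.antisymm (Set.diff_eq_empty.mp hempty.1) (Set.diff_eq_empty.mp hempty.2)

lemma good_eq_cycle {H : Graph α β} (hnl : ∀ e ∈ H.E, ¬ (H.ends e).IsDiag)
    {C : Set β} (hC : H.CycleSet C) {D : Set β} (hDC : D ⊆ C) (hne : D.Nonempty)
    (hgood : ∀ e ∈ D, ∀ v ∈ H.ends e, ∃ f ∈ D, f ≠ e ∧ v ∈ H.ends f) : D = C := by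
  obtain ⟨d, hd⟩ := hne
  obtain ⟨u0, w0, hends_d⟩ := sym2_cases (H.ends d)
  have hv0 : u0 ∈ H.ends d := by rw [hends_d]; exact Sym2.mem_mk_left _ _
  have hkey : ∀ x, Relation.ReflTransGen (H.restrictEdges C).Adj u0 x →
      ∀ f ∈ C, x ∈ H.ends f → f ∈ D := by
    intro x hx
    induction hx with
    | refl =>
      intro f hf hu0f
      by_cases hfd : f = d
      · exact hfd ▸ hd
      · obtain ⟨f0, hf0D, hf0d, hu0f0⟩ := hgood d hd u0 hv0
        have : f0 = f :=
          mem_of_pair hnl hC (hDC hd) hv0 hf hu0f hfd (hDC hf0D) hu0f0 hf0d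
        exact this ▸ hf0D
    | @tail w x hr hadj ih =>
      intro f hfC hxf
      obtain ⟨g, hgE, hge⟩ := hadj
      have hge' : H.ends g = s(w, x) := hge
      have hgC : g ∈ C := hgE.1
      have hgD : g ∈ D := ih g hgC (by rw [hge']; exact Sym2.mem_mk_left _ _)
      by_cases hfg : f = g
      · exact hfg ▸ hgD
      · have hxg : x ∈ H.ends g := by rw [hge']; exact Sym2.mem_mk_right _ _
        obtain ⟨f0, hf0D, hf0g, hxf0⟩ := hgood g hgD x hxg
        have : f0 = f :=
          mem_of_pair hnl hC hgC hxg hfC hxf hfg (hDC hf0D) hxf0 hf0g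
        exact this ▸ hf0D
  refine Set.Subset.antisymm hDC fun c hcC => ?_
  obtain ⟨u, w', hcuw⟩ := sym2_cases (H.ends c)
  have hucmem : u ∈ H.ends c := by rw [hcuw]; exact Sym2.mem_mk_left _ _
  have hucV : u ∈ (H.restrictEdges C).V := ⟨c, ⟨hcC, hC.1 hcC⟩, hucmem⟩
  have hu0V : u0 ∈ (H.restrictEdges C).V := ⟨d, ⟨hDC hd, hC.1 (hDC hd)⟩, hv0⟩
  exact hkey u (hC.2.2.1 u0 hu0V u hucV) c hcC hucmem

end Aux12b
section Aux12c

variable {α : Type u} {β : Type v}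

lemma diag_of_mem_isDiag {s : Sym2 α} {v : α} (hv : v ∈ s) (hd : s.IsDiag) :
    s = Sym2.diag v := by
  obtain ⟨x, y, rfl⟩ := sym2_cases s
  rw [Sym2.mk_isDiag_iff] at hd
  subst hd
  rcases Sym2.mem_iff.mp hv with rfl | rfl <;> rfl

lemma no_loops_aux {H : Graph α β} (hk2 : H.KConnected 2) {a b : α}
    (haV : a ∈ H.V) (hbV : b ∈ H.V) (hab : a ≠ b)
    (hdega : H.degree a = 3) (hdegb : H.degree b = 3)
    {C1 C2 C3 : Set β} (h1 : H.CycleSet C1) (h2 : H.CycleSet C2) (h3 : H.CycleSet C3)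
    (h12 : C1 ≠ C2) (h31 : C3 ≠ C1) (h32 : C3 ≠ C2)
    {e : β} (heE : e ∈ H.E) (hloop : H.ends e = Sym2.diag a) : False := by
  classical
  set A := {f | f ∈ H.E ∧ a ∈ H.ends f ∧ ¬(H.ends f).IsDiag} with hA
  set B := {f | f ∈ H.E ∧ H.ends f = Sym2.diag a} with hB
  have hdeq : A.ncard + 2 * B.ncard = 3 := hdega
  have hBfin : B.Finite := H.finE.subset fun f hf => hf.1
  have hAfin : A.Finite := H.finE.subset fun f hf => hf.1
  have hBpos : 0 < B.ncard := (Set.ncard_pos hBfin).mpr ⟨e, heE, hloop⟩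
  have hA1 : A.ncard = 1 := by omega
  have hB1 : B.ncard = 1 := by omega
  obtain ⟨e', hAe'⟩ := Set.ncard_eq_one.mp hA1
  obtain ⟨e0, hBe0⟩ := Set.ncard_eq_one.mp hB1
  have hBe : B = {e} := by
    have : e ∈ B := ⟨heE, hloop⟩
    rw [hBe0] at this
    rw [hBe0, this]
  have he' : e' ∈ A := by rw [hAe']; rfl
  obtain ⟨he'E, hae', hnd'⟩ := he'
  set w := Sym2.Mem.other hae' with hw
  have hw_spec : s(a, w) = H.ends e' := Sym2.other_spec hae'
  have hwa : w ≠ a := Sym2.other_ne hnd' hae'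
  have hw_mem : w ∈ H.ends e' := by rw [← hw_spec]; exact Sym2.mem_mk_right _ _
  have hwV : w ∈ H.V := H.ends_mem he'E hw_mem
  have hat_a : ∀ g ∈ H.E, a ∈ H.ends g → g = e ∨ g = e' := by
    intro g hg hag
    by_cases hgd : (H.ends g).IsDiag
    · left
      have : g ∈ B := ⟨hg, diag_of_mem_isDiag hag hgd⟩
      rw [hBe] at this
      exact this
    · right
      have : g ∈ A := ⟨hg, hag, hgd⟩
      rw [hAe'] at this
      exact this
  have hconnw : (H.deleteVertex w).Connected :=
    hk2 {w} (by rw [Set.encard_singleton]; exact_mod_cast one_lt_two)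
  have hreach : ∀ x, Relation.ReflTransGen (H.deleteVertex w).Adj a x → x = a := by
    apply reach_eq
    intro g hg hag
    obtain ⟨hgE, hgav⟩ := hg
    rcases hat_a g hgE hag with rfl | rfl
    · exact hloop
    · exact absurd rfl (hgav w hw_mem)
  have hVsub : H.V ⊆ {a, w} := by
    intro u huV
    by_contra hu
    rw [Set.mem_insert_iff, Set.mem_singleton_iff] at hu
    push_neg at hu
    have huVw : u ∈ (H.deleteVertex w).V := ⟨huV, by simp [hu.2]⟩
    have haVw : a ∈ (H.deleteVertex w).V := ⟨haV, by simp [Ne.symm hwa]⟩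
    exact hu.1 (hreach u (hconnw a haVw u huVw))
  have hwb : w = b := by
    rcases hVsub hbV with hh | hh
    · exact absurd hh.symm hab
    · exact hh.symm
  have hAw : {f | f ∈ H.E ∧ w ∈ H.ends f ∧ ¬(H.ends f).IsDiag} = {e'} := by
    apply Set.Subset.antisymm
    · rintro g ⟨hgE, hwg, hgd⟩
      obtain ⟨x, y, hxy⟩ := sym2_cases (H.ends g)
      have hxV : x ∈ H.V := H.ends_mem hgE (by rw [hxy]; exact Sym2.mem_mk_left _ _)
      have hyV : y ∈ H.V := H.ends_mem hgE (by rw [hxy]; exact Sym2.mem_mk_right _ _)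
      have hxyne : x ≠ y := fun hh => hgd (by rw [hxy, Sym2.mk_isDiag_iff]; exact hh)
      have hag : a ∈ H.ends g := by
        rcases hVsub hxV with hh | hh
        · rw [hxy, ← hh]; exact Sym2.mem_mk_left _ _
        · rcases hVsub hyV with hh2 | hh2
          · rw [hxy, ← hh2]; exact Sym2.mem_mk_right _ _
          · exact absurd (hh.trans hh2.symm) hxyne
      rcases hat_a g hgE hag with rfl | rfl
      · exact absurd (hloop ▸ Sym2.diag_isDiag a) hgd
      · rfl
    · intro g hg
      rw [Set.mem_singleton_iff] at hg
      subst hg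
      exact ⟨he'E, hw_mem, hnd'⟩
  have hdegw : {f | f ∈ H.E ∧ w ∈ H.ends f ∧ ¬(H.ends f).IsDiag}.ncard +
      2 * {f | f ∈ H.E ∧ H.ends f = Sym2.diag w}.ncard = 3 := by
    rw [hwb]; exact hdegb
  rw [hAw, Set.ncard_singleton] at hdegw
  have hBw1 : {f | f ∈ H.E ∧ H.ends f = Sym2.diag w}.ncard = 1 := by omega
  obtain ⟨l, hBwl⟩ := Set.ncard_eq_one.mp hBw1
  have hl : l ∈ H.E ∧ H.ends l = Sym2.diag w := by
    have : l ∈ {f | f ∈ H.E ∧ H.ends f = Sym2.diag w} := by rw [hBwl]; rfl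
    exact this
  obtain ⟨hlE, hlends⟩ := hl
  have hEsub : ∀ g ∈ H.E, g = e ∨ g = e' ∨ g = l := by
    intro g hg
    obtain ⟨x, y, hxy⟩ := sym2_cases (H.ends g)
    have hxV : x ∈ H.V := H.ends_mem hg (by rw [hxy]; exact Sym2.mem_mk_left _ _)
    have hyV : y ∈ H.V := H.ends_mem hg (by rw [hxy]; exact Sym2.mem_mk_right _ _)
    rcases hVsub hxV with hh | hh
    · rcases hat_a g hg (by rw [hxy, ← hh]; exact Sym2.mem_mk_left _ _) with rfl | rfl
      · exact Or.inl rfl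
      · exact Or.inr (Or.inl rfl)
    · rcases hVsub hyV with hh2 | hh2
      · rcases hat_a g hg (by rw [hxy, ← hh2]; exact Sym2.mem_mk_right _ _) with rfl | rfl
        · exact Or.inl rfl
        · exact Or.inr (Or.inl rfl)
      · have : g ∈ {f | f ∈ H.E ∧ H.ends f = Sym2.diag w} :=
          ⟨hg, by rw [hxy, hh, hh2]; rfl⟩
        rw [hBwl] at this
        exact Or.inr (Or.inr this)
  have hnoe' : ∀ Cx, H.CycleSet Cx → e' ∉ Cx := by
    intro Cx hCx hmem
    have haK : a ∈ (H.restrictEdges Cx).V := ⟨e', ⟨hmem, he'E⟩, hae'⟩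
    have hdegK : {f | f ∈ (H.restrictEdges Cx).E ∧ a ∈ H.ends f ∧ ¬(H.ends f).IsDiag}.ncard +
        2 * {f | f ∈ (H.restrictEdges Cx).E ∧ H.ends f = Sym2.diag a}.ncard = 2 :=
      hCx.2.2.2 a haK
    have hA' : {f | f ∈ (H.restrictEdges Cx).E ∧ a ∈ H.ends f ∧ ¬(H.ends f).IsDiag} = {e'} := by
      apply Set.Subset.antisymm
      · rintro g ⟨hgK, hag, hgd⟩
        have : g ∈ A := ⟨hgK.2, hag, hgd⟩
        rw [hAe'] at this
        exact this
      · intro g hg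
        rw [Set.mem_singleton_iff] at hg
        subst hg
        exact ⟨⟨hmem, he'E⟩, hae', hnd'⟩
    have hB'sub : {f | f ∈ (H.restrictEdges Cx).E ∧ H.ends f = Sym2.diag a} ⊆ {e} := by
      rintro g ⟨hgK, hgd⟩
      have : g ∈ B := ⟨hgK.2, hgd⟩
      rw [hBe] at this
      exact this
    have hB'card : {f | f ∈ (H.restrictEdges Cx).E ∧ H.ends f = Sym2.diag a}.ncard ≤ 1 := by
      have := Set.ncard_le_ncard hB'sub (Set.finite_singleton e)
      simpa using this
    rw [hA', Set.ncard_singleton] at hdegK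
    omega
  have hnotboth : ∀ Cx, H.CycleSet Cx → e ∈ Cx → l ∈ Cx → False := by
    intro Cx hCx heCx hlCx
    have haK : a ∈ (H.restrictEdges Cx).V :=
      ⟨e, ⟨heCx, heE⟩, by rw [hloop]; exact Sym2.mem_mk_left a a⟩
    have hwK : w ∈ (H.restrictEdges Cx).V :=
      ⟨l, ⟨hlCx, hlE⟩, by rw [hlends]; exact Sym2.mem_mk_left w w⟩
    have hreachK : ∀ x, Relation.ReflTransGen (H.restrictEdges Cx).Adj a x → x = a := by
      apply reach_eq
      intro g hg hag
      rcases hat_a g hg.2 hag with rfl | rfl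
      · exact hloop
      · exact absurd hg.1 (hnoe' Cx hCx)
    exact hwa (hreachK w (hCx.2.2.1 a haK w hwK))
  have hclass : ∀ Cx, H.CycleSet Cx → Cx = {e} ∨ Cx = {l} := by
    intro Cx hCx
    have hsubel : ∀ g ∈ Cx, g = e ∨ g = l := by
      intro g hg
      rcases hEsub g (hCx.1 hg) with hh | hh | hh
      · exact Or.inl hh
      · exact absurd (hh ▸ hg) (hnoe' Cx hCx)
      · exact Or.inr hh
    obtain ⟨g0, hg0⟩ := hCx.2.1
    have hg0Cx : g0 ∈ Cx := hg0.1
    by_cases he_in : e ∈ Cx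
    · left
      apply Set.Subset.antisymm
      · intro g hg
        rcases hsubel g hg with hh | hh
        · exact hh
        · exact absurd (hnotboth Cx hCx he_in (hh ▸ hg)) not_false
      · exact Set.singleton_subset_iff.mpr he_in
    · right
      apply Set.Subset.antisymm
      · intro g hg
        rcases hsubel g hg with hh | hh
        · exact absurd (hh ▸ hg) he_in
        · exact hh
      · refine Set.singleton_subset_iff.mpr ?_
        rcases hsubel g0 hg0Cx with hh | hh
        · exact absurd (hh ▸ hg0Cx) he_in
        · exact hh ▸ hg0Cx
  rcases hclass C1 h1 with hc1 | hc1 <;> rcases hclass C2 h2 with hc2 | hc2 <;>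
    rcases hclass C3 h3 with hc3 | hc3 <;>
    first
      | exact h12 (hc1.trans hc2.symm)
      | exact h31 (hc3.trans hc1.symm)
      | exact h32 (hc3.trans hc2.symm)

lemma no_loops {H : Graph α β} (htheta : H.IsTheta) {C1 C2 C3 : Set β}
    (h1 : H.CycleSet C1) (h2 : H.CycleSet C2) (h3 : H.CycleSet C3)
    (h12 : C1 ≠ C2) (h31 : C3 ≠ C1) (h32 : C3 ≠ C2) :
    ∀ e ∈ H.E, ¬ (H.ends e).IsDiag := by
  obtain ⟨hk2, a, haV, b, hbV, hab, hdega, hdegb, hdeg2⟩ := htheta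
  intro e heE hdiag
  obtain ⟨x, y, hxy⟩ := sym2_cases (H.ends e)
  rw [hxy, Sym2.mk_isDiag_iff] at hdiag
  subst hdiag
  have hloop : H.ends e = Sym2.diag x := hxy
  have hxV : x ∈ H.V := H.ends_mem heE (by rw [hloop]; exact Sym2.mem_mk_left x x)
  by_cases hxa : x = a
  · exact no_loops_aux hk2 haV hbV hab hdega hdegb h1 h2 h3 h12 h31 h32 heE (hxa ▸ hloop)
  by_cases hxb : x = b
  · exact no_loops_aux hk2 hbV haV hab.symm hdegb hdega h1 h2 h3 h12 h31 h32 heE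
      (hxb ▸ hloop)
  · have hd2 : H.degree x = 2 := hdeg2 x hxV hxa hxb
    set A := {f | f ∈ H.E ∧ x ∈ H.ends f ∧ ¬(H.ends f).IsDiag} with hA
    set B := {f | f ∈ H.E ∧ H.ends f = Sym2.diag x} with hB
    have hdeq : A.ncard + 2 * B.ncard = 2 := hd2
    have hBfin : B.Finite := H.finE.subset fun f hf => hf.1
    have hAfin : A.Finite := H.finE.subset fun f hf => hf.1
    have hBpos : 0 < B.ncard := (Set.ncard_pos hBfin).mpr ⟨e, heE, hloop⟩
    have hA0 : A.ncard = 0 := by omega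
    have hAempty : A = ∅ := (Set.ncard_eq_zero hAfin).mp hA0
    have hedges : ∀ g ∈ H.E, x ∈ H.ends g → H.ends g = Sym2.diag x := by
      intro g hg hxg
      by_cases hgd : (H.ends g).IsDiag
      · exact diag_of_mem_isDiag hxg hgd
      · have hgA : g ∈ A := ⟨hg, hxg, hgd⟩
        rw [hAempty] at hgA
        exact hgA.elim
    have hconna : (H.deleteVertex a).Connected :=
      hk2 {a} (by rw [Set.encard_singleton]; exact_mod_cast one_lt_two)
    have hxVa : x ∈ (H.deleteVertex a).V := ⟨hxV, by simp [hxa]⟩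
    have hbVa : b ∈ (H.deleteVertex a).V := ⟨hbV, by simp [Ne.symm hab]⟩
    have hreach := reach_eq (K := H.deleteVertex a) (v := x)
      (fun g hg hxg => hedges g hg.1 hxg) b (hconna x hxVa b hbVa)
    exact hxb hreach.symm
end Aux12c
/-- Let `G` be a weak framework for a matroid `M` and let `H` be a
theta-subgraph of `G`. If two of the three cycles of `H` are balanced (i.e. their edge
sets are circuits of `M`), then so is the third. -/
theorem statement12 {α : Type u} {β : Type v} (G H : Graph α β) (M : Matroid β)
    (h : WeakFramework G M) (hsub : H.IsSubgraph G) (htheta : H.IsTheta)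
    (C1 C2 C3 : Set β) (h1 : H.CycleSet C1) (h2 : H.CycleSet C2) (h3 : H.CycleSet C3)
    (h12 : C1 ≠ C2) (h31 : C3 ≠ C1) (h32 : C3 ≠ C2)
    (b1 : IsCircuit M C1) (b2 : IsCircuit M C2) :
    IsCircuit M C3 := by
  have hends : H.ends = G.ends := hsub.2.2
  have hHG : H.E ⊆ G.E := hsub.2.1
  have hGE : G.E = M.E := h.1
  obtain ⟨hk2, a, haV, b, hbV, hab, hdega, hdegb, hdeg2⟩ := htheta
  have hnl : ∀ e ∈ H.E, ¬ (H.ends e).IsDiag :=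
    no_loops ⟨hk2, a, haV, b, hbV, hab, hdega, hdegb, hdeg2⟩ h1 h2 h3 h12 h31 h32
  have hinc2 : ∀ v ∈ H.V, v ≠ a → v ≠ b → (inc H v).ncard = 2 := fun v hv hva hvb => by
    rw [← degree_eq_ncard_inc hnl]; exact hdeg2 v hv hva hvb
  have hconnb : (H.deleteVertex b).Connected :=
    hk2 {b} (by rw [Set.encard_singleton]; exact_mod_cast one_lt_two)
  obtain ⟨f1, hf1C, hf1a⟩ := cycle_touches haV hab hconnb hnl hinc2 h1
  obtain ⟨f2, hf2C, hf2a⟩ := cycle_touches haV hab hconnb hnl hinc2 h2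
  obtain ⟨f3, hf3C, hf3a⟩ := cycle_touches haV hab hconnb hnl hinc2 h3
  have hP1card : {f | f ∈ C1 ∧ a ∈ H.ends f}.ncard = 2 := cycle_inc_ncard h1 hnl hf1C hf1a
  have hP2card : {f | f ∈ C2 ∧ a ∈ H.ends f}.ncard = 2 := cycle_inc_ncard h2 hnl hf2C hf2a
  have hP3card : {f | f ∈ C3 ∧ a ∈ H.ends f}.ncard = 2 := cycle_inc_ncard h3 hnl hf3C hf3a
  have hIa : (inc H a).ncard = 3 := by
    rw [← degree_eq_ncard_inc hnl]; exact hdega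
  have hP1sub : {f | f ∈ C1 ∧ a ∈ H.ends f} ⊆ inc H a := fun f hf => ⟨h1.1 hf.1, hf.2⟩
  have hP2sub : {f | f ∈ C2 ∧ a ∈ H.ends f} ⊆ inc H a := fun f hf => ⟨h2.1 hf.1, hf.2⟩
  have hP3sub : {f | f ∈ C3 ∧ a ∈ H.ends f} ⊆ inc H a := fun f hf => ⟨h3.1 hf.1, hf.2⟩
  have hP3fin : {f | f ∈ C3 ∧ a ∈ H.ends f}.Finite := (inc_finite H a).subset hP3sub
  have hdiffcard : (inc H a \ {f | f ∈ C3 ∧ a ∈ H.ends f}).ncard = 1 := by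
    rw [Set.ncard_diff hP3sub hP3fin, hIa, hP3card]
  obtain ⟨e1, he1⟩ := Set.ncard_eq_one.mp hdiffcard
  have hP13 : {f | f ∈ C1 ∧ a ∈ H.ends f} ≠ {f | f ∈ C3 ∧ a ∈ H.ends f} := fun hEq =>
    h31 (cycle_eq_of_inc_eq haV hab hconnb hnl hinc2 h3 h1 hEq.symm)
  have hP23 : {f | f ∈ C2 ∧ a ∈ H.ends f} ≠ {f | f ∈ C3 ∧ a ∈ H.ends f} := fun hEq =>
    h32 (cycle_eq_of_inc_eq haV hab hconnb hnl hinc2 h3 h2 hEq.symm)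
  have he1P1 : e1 ∈ {f | f ∈ C1 ∧ a ∈ H.ends f} := by
    have hne : ({f | f ∈ C1 ∧ a ∈ H.ends f} \ {f | f ∈ C3 ∧ a ∈ H.ends f}).Nonempty := by
      rw [Set.nonempty_iff_ne_empty]
      intro hemp
      exact hP13 (Set.eq_of_subset_of_ncard_le (Set.diff_eq_empty.mp hemp)
        (by rw [hP1card, hP3card]) hP3fin)
    obtain ⟨p, hp1, hp3⟩ := hne
    have hpmem : p ∈ inc H a \ {f | f ∈ C3 ∧ a ∈ H.ends f} := ⟨hP1sub hp1, hp3⟩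
    rw [he1, Set.mem_singleton_iff] at hpmem
    exact hpmem ▸ hp1
  have he1P2 : e1 ∈ {f | f ∈ C2 ∧ a ∈ H.ends f} := by
    have hne : ({f | f ∈ C2 ∧ a ∈ H.ends f} \ {f | f ∈ C3 ∧ a ∈ H.ends f}).Nonempty := by
      rw [Set.nonempty_iff_ne_empty]
      intro hemp
      exact hP23 (Set.eq_of_subset_of_ncard_le (Set.diff_eq_empty.mp hemp)
        (by rw [hP2card, hP3card]) hP3fin)
    obtain ⟨p, hp1, hp3⟩ := hne
    have hpmem : p ∈ inc H a \ {f | f ∈ C3 ∧ a ∈ H.ends f} := ⟨hP2sub hp1, hp3⟩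
    rw [he1, Set.mem_singleton_iff] at hpmem
    exact hpmem ▸ hp1
  have he1a : a ∈ H.ends e1 := he1P1.2
  have he1C1 : e1 ∈ C1 := he1P1.1
  have he1C2 : e1 ∈ C2 := he1P2.1
  have he1C3 : e1 ∉ C3 := by
    intro hmem
    have hmem' : e1 ∈ inc H a \ {f | f ∈ C3 ∧ a ∈ H.ends f} := by rw [he1]; rfl
    exact hmem'.2 ⟨hmem, he1a⟩
  have hC2nC1 : ∃ e0 ∈ C2, e0 ∉ C1 := by
    by_contra hcon
    push_neg at hcon
    have hss : C2 ⊂ C1 := ⟨hcon, fun hsub2 => h12 (Set.Subset.antisymm hsub2 hcon)⟩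
    exact b2.1.not_indep (b1.2 C2 hss)
  obtain ⟨e0, he0C2, he0C1⟩ := hC2nC1
  have hdepT : M.Dep ((C1 ∪ C2) \ {e1}) := dep_of_two_circuits b1 b2 he1C1 he1C2 he0C2 he0C1
  have hTE : (C1 ∪ C2) \ {e1} ⊆ H.E := fun f hf =>
    hf.1.elim (fun hh => h1.1 hh) fun hh => h2.1 hh
  have hgoodD : ∀ D : Set β, D ⊆ H.E → IsCircuit M D →
      ∀ e ∈ D, ∀ v ∈ H.ends e, ∃ f ∈ D, f ≠ e ∧ v ∈ H.ends f := by
    intro D hDE hD e he v hv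
    rw [hends] at hv
    obtain ⟨f, hfD, hfe, hvf⟩ := circuit_good h hD (hDE.trans hHG) he hv
      (by rw [← hends]; exact hnl e (hDE he))
    exact ⟨f, hfD, hfe, by rw [hends]; exact hvf⟩
  by_cases hC3i : M.Indep C3
  · exfalso
    have hTfin : ((C1 ∪ C2) \ {e1}).Finite := H.finE.subset hTE
    obtain ⟨D, hDT, hD⟩ :=
      exists_circuit_subset ((C1 ∪ C2) \ {e1}).ncard _ hTfin le_rfl hdepT
    have hDH : D ⊆ H.E := hDT.trans hTE
    have hgood := hgoodD D hDH hD
    have hSempty : D \ C3 = ∅ := by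
      refine walk_empty haV hab hconnb hnl (fun f hf => hDH hf.1) ?_ ?_
      · rintro f ⟨hfD, hfC3⟩ haf
        have hfmem : f ∈ inc H a \ {x | x ∈ C3 ∧ a ∈ H.ends x} :=
          ⟨⟨hDH hfD, haf⟩, fun hx => hfC3 hx.1⟩
        rw [he1, Set.mem_singleton_iff] at hfmem
        subst hfmem
        exact (hDT hfD).2 rfl
      · rintro v hva hvb f ⟨hfD, hfC3⟩ hvf g hgE hvg
        have hvV : v ∈ H.V := H.ends_mem (hDH hfD) hvf
        have hvinc := hinc2 v hvV hva hvb
        obtain ⟨f0, hf0D, hf0f, hvf0⟩ := hgood f hfD v hvf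
        have hpair : ({f, f0} : Set β) = inc H v :=
          Set.eq_of_subset_of_ncard_le
            (by rintro x (rfl | rfl); exacts [⟨hDH hfD, hvf⟩, ⟨hDH hf0D, hvf0⟩])
            (le_of_eq (by rw [hvinc, Set.ncard_pair (Ne.symm hf0f)])) (inc_finite H v)
        have hgmem : g ∈ ({f, f0} : Set β) := by rw [hpair]; exact ⟨hgE, hvg⟩
        have hf0C3 : f0 ∉ C3 := fun hmem =>
          hfC3 (cycle_closed h3 hnl hvinc hmem hvf0 f (hDH hfD) hvf)
        rcases hgmem with hh | hh
        · subst hh; exact ⟨hfD, hfC3⟩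
        · rw [Set.mem_singleton_iff] at hh
          subst hh; exact ⟨hf0D, hf0C3⟩
    have hDC3 : D ⊆ C3 := Set.diff_eq_empty.mp hSempty
    exact hD.1.not_indep (hC3i.subset hDC3)
  · have hC3E : C3 ⊆ M.E := fun f hf => by rw [← hGE]; exact hHG (h3.1 hf)
    have hdep3 : M.Dep C3 := Matroid.dep_iff.mpr ⟨hC3i, hC3E⟩
    have hC3fin : C3.Finite := H.finE.subset h3.1
    obtain ⟨D, hDC3, hD⟩ := exists_circuit_subset C3.ncard _ hC3fin le_rfl hdep3
    have heq : D = C3 := good_eq_cycle hnl h3 hDC3 hD.1.nonempty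
      (hgoodD D (hDC3.trans h3.1) hD)
    exact heq ▸ hD

end QuasiGraphicPaper
end

section
/- Let G be a weak framework for a matroid M. If H is a connected component of G, then λ_M(E(H)) ≤ 1, where λ_M(X) = r_M(X) + r_M(E(M)−X) − r(M). -/
open Set Matroid
open scoped Classical

namespace QuasiGraphicPaper

universe u v

/-! ### Matroid notions -/

variable {α : Type u} {β : Type v}

/-! ### Auxiliary rank lemmas -/

/-- The extended-natural-valued rank, of which `rank` is the truncation. -/
noncomputable def erank (M : Matroid β) (X : Set β) : ℕ∞ :=
  ⨆ I ∈ {I : Set β | M.Indep I ∧ I ⊆ X}, I.encard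

lemma rank_eq_toNat_erank (M : Matroid β) (X : Set β) : rank M X = (erank M X).toNat := rfl

lemma le_erank {M : Matroid β} {I X : Set β} (hI : M.Indep I) (hIX : I ⊆ X) :
    I.encard ≤ erank M X :=
  le_biSup (fun I : Set β => I.encard) (⟨hI, hIX⟩ : I ∈ {I : Set β | M.Indep I ∧ I ⊆ X})

lemma erank_le {M : Matroid β} {X : Set β} {c : ℕ∞}
    (h : ∀ I, M.Indep I → I ⊆ X → I.encard ≤ c) : erank M X ≤ c :=
  iSup₂_le fun I hI => h I hI.1 hI.2

lemma erank_mono (M : Matroid β) {X Y : Set β} (hXY : X ⊆ Y) : erank M X ≤ erank M Y :=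
  erank_le fun I hI hIX => le_erank hI (hIX.trans hXY)

lemma erank_le_encard (M : Matroid β) (X : Set β) : erank M X ≤ X.encard :=
  erank_le fun _ _ hIX => encard_mono hIX

lemma erank_eq_of_basis' {M : Matroid β} {J X : Set β} (hJ : M.IsBasis' J X) :
    erank M X = J.encard := by
  refine le_antisymm (erank_le fun I hI hIX => ?_) (le_erank hJ.indep hJ.subset)
  obtain ⟨J', hJ', hIJ'⟩ := hI.subset_isBasis'_of_subset hIX
  exact (encard_mono hIJ').trans_eq (hJ'.encard_eq_encard hJ)

lemma erank_insert {M : Matroid β} {Z : Set β} {g : β} (hg : g ∈ M.E)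
    (hgZ : g ∉ M.closure Z) : erank M Z + 1 ≤ erank M (insert g Z) := by
  obtain ⟨J, hJ⟩ := M.exists_isBasis' Z
  have hgJ : g ∉ M.closure J := by rwa [hJ.closure_eq_closure]
  have hind : M.Indep (insert g J) := hJ.indep.insert_indep_iff.mpr (Or.inl ⟨hg, hgJ⟩)
  have hgnJ : g ∉ J := fun h' => hgJ (M.subset_closure J hJ.indep.subset_ground h')
  calc erank M Z + 1 = J.encard + 1 := by rw [erank_eq_of_basis' hJ]
    _ = (insert g J).encard := (Set.encard_insert_of_notMem hgnJ).symm
    _ ≤ _ := le_erank hind (insert_subset_insert hJ.subset)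

/-- Let `G` be a weak framework for a matroid `M`. If `H` is a connected
component of `G`, then `λ_M(E(H)) ≤ 1`, where
`λ_M(X) = r_M(X) + r_M(E(M)−X) − r(M)`. -/
theorem statement14 {α : Type u} {β : Type v} (G H : Graph α β) (M : Matroid β)
    (h : WeakFramework G M) (hH : H.IsComponentOf G) :
    rank M H.E + rank M (M.E \ H.E) ≤ rank M M.E + 1 := by
  obtain ⟨v, hvG, rfl⟩ := hH
  obtain ⟨hGE, hcond2, hcond3⟩ := h
  set R : Set α := (G.componentOf v).V with hRdef
  set X : Set β := (G.componentOf v).E with hXdef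
  set Y : Set β := M.E \ X with hYdef
  -- every edge with a reachable endpoint lies in the component
  have hreach_edge : ∀ e ∈ G.E, ∀ w, w ∈ G.ends e →
      Relation.ReflTransGen G.Adj v w → e ∈ X := by
    intro e he w hwe hvw
    refine ⟨he, fun x hx => ?_⟩
    have hsp := Sym2.other_spec hwe
    have hadj : G.Adj w (Sym2.Mem.other hwe) := ⟨e, he, hsp.symm⟩
    rw [← hsp, Sym2.mem_iff] at hx
    rcases hx with rfl | rfl
    · exact hvw
    · exact hvw.tail hadj
  have hYavoid : ∀ f ∈ Y, ∀ w, Relation.ReflTransGen G.Adj v w → w ∉ G.ends f := by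
    intro f hf w hvw hwf
    exact hf.2 (hreach_edge f (by rw [hGE]; exact hf.1) w hwf hvw)
  have hRV : R ⊆ G.V := fun u hu => hu.1
  have hvR : v ∈ R := ⟨hvG, Relation.ReflTransGen.refl⟩
  have hRfin : R.Finite := G.finV.subset hRV
  -- crossing lemma
  have hcross : ∀ (S : Set α), v ∈ S → ∀ u, Relation.ReflTransGen G.Adj v u → u ∉ S →
      ∃ s ∈ S, ∃ w, w ∉ S ∧ G.Adj s w ∧ Relation.ReflTransGen G.Adj v w := by
    intro S hvS u hu
    induction hu with
    | refl => intro h'; exact absurd hvS h'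
    | @tail b c hvb hbc ih =>
      intro hcS
      by_cases hbS : b ∈ S
      · exact ⟨b, hbS, c, hcS, hbc, hvb.tail hbc⟩
      · exact ih hbS
  -- main induction
  have key : ∀ k : ℕ, k + 1 ≤ R.ncard → ∃ (S : Set α) (T : Set β),
      S ⊆ R ∧ v ∈ S ∧ S.Finite ∧ S.ncard = k + 1 ∧ T ⊆ M.E ∧
      (∀ f ∈ T, ∀ x ∈ G.ends f, x ∈ S) ∧ erank M Y + (k : ℕ∞) ≤ erank M (Y ∪ T) := by
    intro k
    induction k with
    | zero =>
      intro _
      exact ⟨{v}, ∅, singleton_subset_iff.2 hvR, mem_singleton v, finite_singleton v,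
        by simp, empty_subset _, by simp, by simp⟩
    | succ k ih =>
      intro hk
      obtain ⟨S, T, hSR, hvS, hSfin, hScard, hTE, hTends, herank⟩ := ih (by omega)
      have hne : S ≠ R := by
        intro hSReq
        rw [hSReq] at hScard
        omega
      obtain ⟨u, huR, huS⟩ := exists_of_ssubset (hSR.ssubset_of_ne hne)
      obtain ⟨s, hsS, w, hwS, hadj, hvw⟩ := hcross S hvS u huR.2 huS
      obtain ⟨g, hgE, hgends⟩ := hadj
      have hwend : w ∈ G.ends g := by rw [hgends]; exact Sym2.mem_mk_right s w
      have hwV : w ∈ G.V := G.ends_mem hgE hwend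
      have hswne : s ≠ w := fun h' => hwS (h' ▸ hsS)
      have hsub : Y ∪ T ⊆ (G.deleteVertex w).E := by
        rintro f (hf | hf)
        · refine ⟨by rw [hGE]; exact hf.1, fun x hx hxw => ?_⟩
          rw [mem_singleton_iff] at hxw
          exact hYavoid f hf w hvw (hxw ▸ hx)
        · refine ⟨by rw [hGE]; exact hTE hf, fun x hx hxw => ?_⟩
          rw [mem_singleton_iff] at hxw
          exact hwS (hxw ▸ hTends f hf x hx)
      have hgcl : g ∉ M.closure (Y ∪ T) := by
        intro hgin
        have h1 : g ∈ (G.deleteVertex w).E ∪ G.loopsAt w :=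
          hcond3 w hwV (M.closure_subset_closure hsub hgin)
        rcases h1 with h1 | h1
        · exact h1.2 w hwend rfl
        · have h2 : G.ends g = Sym2.diag w := h1.2
          rw [hgends] at h2
          have h3 : s(s, w) = s(w, w) := h2
          rw [Sym2.eq_iff] at h3
          rcases h3 with ⟨h3, -⟩ | ⟨h3, -⟩ <;> exact hswne h3
      have hgME : g ∈ M.E := by rw [← hGE]; exact hgE
      refine ⟨insert w S, insert g T, insert_subset ⟨hwV, hvw⟩ hSR,
        mem_insert_of_mem _ hvS, hSfin.insert w,
        by rw [ncard_insert_of_notMem hwS hSfin, hScard], insert_subset hgME hTE, ?_, ?_⟩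
      · intro f hf x hx
        rcases mem_insert_iff.1 hf with rfl | hf'
        · rw [hgends, Sym2.mem_iff] at hx
          rcases hx with rfl | rfl
          · exact mem_insert_of_mem _ hsS
          · exact mem_insert _ _
        · exact mem_insert_of_mem _ (hTends f hf' x hx)
      · calc erank M Y + ((k + 1 : ℕ) : ℕ∞) = (erank M Y + (k : ℕ∞)) + 1 := by
              push_cast; ring
          _ ≤ erank M (Y ∪ T) + 1 := add_le_add_left herank 1
          _ ≤ erank M (insert g (Y ∪ T)) := erank_insert hgME hgcl
          _ = erank M (Y ∪ insert g T) := by rw [union_insert]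
  have hn1 : 1 ≤ R.ncard := by
    have hpos : 0 < R.ncard := (ncard_pos hRfin).2 ⟨v, hvR⟩
    omega
  obtain ⟨S, T, -, -, -, -, hTE, -, herank⟩ := key (R.ncard - 1) (by omega)
  have hEfin : M.E.Finite := hGE ▸ G.finE
  have hYT : Y ∪ T ⊆ M.E := union_subset diff_subset hTE
  have h1 : erank M Y + ((R.ncard - 1 : ℕ) : ℕ∞) ≤ erank M M.E :=
    herank.trans (erank_mono M hYT)
  have hEtop : erank M M.E ≠ ⊤ :=
    ne_top_of_le_ne_top hEfin.encard_lt_top.ne (erank_le_encard M M.E)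
  have hYtop : erank M Y ≠ ⊤ := ne_top_of_le_ne_top hEtop (erank_mono M diff_subset)
  have hX2 : rank M X ≤ R.ncard := hcond2 (G.componentOf v) ⟨v, hvG, rfl⟩
  have h2 : rank M Y + (R.ncard - 1) ≤ rank M M.E := by
    have h3 := ENat.toNat_le_toNat h1 hEtop
    rw [ENat.toNat_add hYtop (by simp), ENat.toNat_natCast] at h3
    simpa [rank_eq_toNat_erank] using h3
  simp only [rank_eq_toNat_erank] at hX2 h2 ⊢
  omega

end QuasiGraphicPaper
end
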